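/- For any function u in H¹(0,a) with u(0) = 0 and u not identically zero, the Pólya quotient (∫₀ᵃ u dx)² / ∫₀ᵃ (u')² dx is at most a³/3, with equality attained by u(x) = x(2a-x)/2. -/

import Mathlib

open MeasureTheory intervalIntegral

lemma polya_fubini (a : ℝ) (ha : 0 ≤ a) (f : ℝ → ℝ)
    (hf : IntervalIntegrable f volume 0 a) :
    (∫ x in (0:ℝ)..a, ∫ t in (0:ℝ)..x, f t) = ∫ t in (0:ℝ)..a, (a - t) * f t := by
  have hfi : IntegrableOn f (Set.Ioc 0 a) volume :=
    (intervalIntegrable_iff_integrableOn_Ioc_of_le ha).mp hf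
  set ν : Measure ℝ := volume.restrict (Set.Ioc 0 a) with hν
  haveI : IsFiniteMeasure ν := ⟨by
    rw [hν, Measure.restrict_apply_univ, Real.volume_Ioc]
    exact ENNReal.ofReal_lt_top⟩
  set S : Set (ℝ × ℝ) := {p : ℝ × ℝ | p.2 ≤ p.1} with hS
  have hSm : MeasurableSet S := measurableSet_le measurable_snd measurable_fst
  set g : ℝ × ℝ → ℝ := fun p => f p.2 with hg
  have hgm : AEStronglyMeasurable g (ν.prod ν) := hfi.aestronglyMeasurable.comp_snd
  have hgint : Integrable g (ν.prod ν) := by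
    rw [integrable_prod_iff hgm]
    constructor
    · exact Filter.Eventually.of_forall fun x => hfi
    · show Integrable (fun _ : ℝ => ∫ y, ‖f y‖ ∂ν) ν
      exact integrable_const _
  have hFint : Integrable (S.indicator g) (ν.prod ν) := hgint.indicator hSm
  rw [intervalIntegral.integral_of_le ha, intervalIntegral.integral_of_le ha]
  calc (∫ x in Set.Ioc 0 a, ∫ t in (0:ℝ)..x, f t)
      = ∫ x in Set.Ioc 0 a, ∫ t in Set.Ioc 0 a, S.indicator g (x, t) := by
        refine setIntegral_congr_fun measurableSet_Ioc (fun x hx => ?_)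
        have hx0 : (0:ℝ) ≤ x := hx.1.le
        have h1 : (fun t => S.indicator g (x, t)) = (Set.Iic x).indicator f := by
          funext t
          by_cases h : t ≤ x <;>
            simp [Set.indicator, hS, hg, h]
        rw [h1, MeasureTheory.integral_indicator measurableSet_Iic,
          intervalIntegral.integral_of_le hx0, Measure.restrict_restrict measurableSet_Iic]
        congr 1
        rw [Set.Iic_inter_Ioc_of_le hx.2]
    _ = ∫ t in Set.Ioc 0 a, ∫ x in Set.Ioc 0 a, S.indicator g (x, t) := by
        exact integral_integral_swap (by
          exact hFint)
    _ = ∫ t in Set.Ioc 0 a, (a - t) * f t := by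
        refine setIntegral_congr_fun measurableSet_Ioc (fun t ht => ?_)
        have h1 : (fun x => S.indicator g (x, t)) = (Set.Ici t).indicator (fun _ => f t) := by
          funext x
          by_cases h : t ≤ x <;>
            simp [Set.indicator, hS, hg, h]
        rw [h1, MeasureTheory.integral_indicator measurableSet_Ici, Measure.restrict_restrict measurableSet_Ici]
        have h2 : Set.Ici t ∩ Set.Ioc 0 a = Set.Icc t a := by
          ext x
          simp only [Set.mem_inter_iff, Set.mem_Ici, Set.mem_Ioc, Set.mem_Icc]
          exact ⟨fun ⟨h1', _, h3'⟩ => ⟨h1', h3'⟩, fun ⟨h1', h2'⟩ => ⟨h1', lt_of_lt_of_le ht.1 h1', h2'⟩⟩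
        rw [h2, setIntegral_const, Real.volume_real_Icc_of_le (by linarith [ht.2] : t ≤ a), smul_eq_mul]

lemma integral_sq_shift (a : ℝ) : (∫ t in (0:ℝ)..a, (a - t) ^ 2) = a ^ 3 / 3 := by
  have := intervalIntegral.integral_comp_sub_left (a := (0:ℝ)) (b := a) (fun x => x ^ 2) a
  simp only [sub_zero, sub_self] at this
  rw [this, integral_pow]
  norm_num

theorem stmt4 (a : ℝ) (ha : 0 < a) :
    (∀ u u' : ℝ → ℝ,
        IntervalIntegrable u' volume 0 a →
        IntervalIntegrable (fun x => (u' x) ^ 2) volume 0 a →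
        (∀ x ∈ Set.Icc (0:ℝ) a, u x = ∫ t in (0:ℝ)..x, u' t) →
        0 < (∫ x in (0:ℝ)..a, (u' x) ^ 2) →
        (∫ x in (0:ℝ)..a, u x) ^ 2 / (∫ x in (0:ℝ)..a, (u' x) ^ 2) ≤ a ^ 3 / 3) ∧
      (∫ x in (0:ℝ)..a, x * (2 * a - x) / 2) ^ 2 /
          (∫ x in (0:ℝ)..a, (a - x) ^ 2) = a ^ 3 / 3 := by
  constructor
  · intro u u' hu' hu'2 hu hC
    set A : ℝ := ∫ t in (0:ℝ)..a, (a - t) ^ 2 with hA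
    set B : ℝ := ∫ t in (0:ℝ)..a, (a - t) * u' t with hB
    set C : ℝ := ∫ x in (0:ℝ)..a, (u' x) ^ 2 with hCdef
    have hAval : A = a ^ 3 / 3 := integral_sq_shift a
    have hwu' : IntervalIntegrable (fun t => (a - t) * u' t) volume 0 a :=
      hu'.continuousOn_mul ((continuous_const.sub continuous_id).continuousOn)
    have hnum : (∫ x in (0:ℝ)..a, u x) = B := by
      rw [intervalIntegral.integral_congr (g := fun x => ∫ t in (0:ℝ)..x, u' t)
        (fun x hx => hu x (by rwa [Set.uIcc_of_le ha.le] at hx))]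
      exact polya_fubini a ha.le u' hu'
    -- Cauchy-Schwarz via nonnegativity
    have h1 : IntervalIntegrable (fun t => C ^ 2 * (a - t) ^ 2) volume 0 a :=
      (Continuous.intervalIntegrable (by continuity) 0 a)
    have h2 : IntervalIntegrable (fun t => (2 * C * B) * ((a - t) * u' t)) volume 0 a :=
      hwu'.const_mul _
    have h3 : IntervalIntegrable (fun t => B ^ 2 * (u' t) ^ 2) volume 0 a :=
      hu'2.const_mul _
    have hexp : (∫ t in (0:ℝ)..a, (C * (a - t) - B * u' t) ^ 2)
        = C ^ 2 * A - 2 * C * B * B + B ^ 2 * C := by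
      rw [intervalIntegral.integral_congr
        (g := fun t => (C ^ 2 * (a - t) ^ 2 - (2 * C * B) * ((a - t) * u' t))
          + B ^ 2 * (u' t) ^ 2) (fun t _ => by ring),
        intervalIntegral.integral_add (h1.sub h2) h3,
        intervalIntegral.integral_sub h1 h2,
        intervalIntegral.integral_const_mul, intervalIntegral.integral_const_mul,
        intervalIntegral.integral_const_mul]
    have hnonneg : 0 ≤ (∫ t in (0:ℝ)..a, (C * (a - t) - B * u' t) ^ 2) :=
      intervalIntegral.integral_nonneg ha.le (fun t _ => sq_nonneg _)
    rw [hexp] at hnonneg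
    rw [hnum, div_le_iff₀ hC, ← hAval]
    nlinarith [hC, hnonneg]
  · have h1 : (∫ x in (0:ℝ)..a, x * (2 * a - x) / 2) = a ^ 3 / 3 := by
      rw [intervalIntegral.integral_congr (g := fun x => a * x - x ^ 2 / 2)
        (fun x _ => by ring),
        intervalIntegral.integral_sub
          (Continuous.intervalIntegrable (by continuity) 0 a)
          (Continuous.intervalIntegrable (by continuity) 0 a),
        intervalIntegral.integral_const_mul, intervalIntegral.integral_div,
        integral_id, integral_pow]
      ring
    rw [h1, integral_sq_shift]
    have h3 : a ^ 3 / 3 ≠ 0 := by positivity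
    rw [sq, mul_div_assoc, div_self h3, mul_one]
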